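/- Let X = (X_1, X_2, ...) be a conditionally identically distributed (c.i.d.) sequence on a measurable space, i.e., E(I_B(X_k) | σ(X_1,...,X_n)) = E(I_B(X_{n+1}) | σ(X_1,...,X_n)) a.s. for all measurable B and all k > n ≥ 0. Then for every measurable set B and all k > n, E(μ_k(B) | G_n) = (1/k)[Σ_{i=1}^{min(n,k)} I_B(X_i) + (k - n)^+ · a_n(B)] a.s., where μ_k = (1/k)Σ_{i=1}^k δ_{X_i} is the empirical measure, G_n = σ(X_1,...,X_n), and a_n(B) = P(X_{n+1} ∈ B | G_n). In particular, if μ_n(B) → μ(B) a.s. for a bounded random variable μ(B), then E(μ(B) | G_n) = a_n(B) a.s. -/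

import Mathlib

open MeasureTheory Filter Set

/-- The σ-field generated by the first `n` coordinates. -/
noncomputable def cylG (S : Type*) [MeasurableSpace S] (n : ℕ) : MeasurableSpace (ℕ → S) :=
  MeasurableSpace.comap (fun ω (i : Fin n) => ω i) inferInstance

/-- Empirical frequency of `B` among the first `n` observations. -/
noncomputable def empMeas {S : Type*} (n : ℕ) (B : Set S) (ω : ℕ → S) : ℝ :=
  (n : ℝ)⁻¹ * ∑ i ∈ Finset.range n, B.indicator (fun _ => (1 : ℝ)) (ω i)

/-- The predictive probability `a_n(B) = P(X_{n+1} ∈ B ∣ G_n)` (0-indexed: the next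
observation after the first `n` is coordinate `n`). -/
noncomputable def predProb {S : Type*} [MeasurableSpace S] (P : Measure (ℕ → S))
    (n : ℕ) (B : Set S) : (ℕ → S) → ℝ :=
  P[fun ω => B.indicator (fun _ => (1 : ℝ)) (ω n) | cylG S n]

/-- The sequence of coordinates is conditionally identically distributed under `P`. -/
def CID {S : Type*} [MeasurableSpace S] (P : Measure (ℕ → S)) : Prop :=
  ∀ B : Set S, MeasurableSet B → ∀ n k : ℕ, n < k →
    (P[fun ω => B.indicator (fun _ => (1 : ℝ)) (ω k) | cylG S n])
      =ᵐ[P] P[fun ω => B.indicator (fun _ => (1 : ℝ)) (ω n) | cylG S n]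

section Aux
variable {S : Type*} [MeasurableSpace S]

lemma cylG_le (n : ℕ) : cylG S n ≤ (inferInstance : MeasurableSpace (ℕ → S)) :=
  measurable_iff_comap_le.mp (measurable_pi_lambda _ fun j => measurable_pi_apply (j : ℕ))

lemma indMeas {B : Set S} (hB : MeasurableSet B) (i : ℕ) :
    Measurable fun ω : ℕ → S => B.indicator (fun _ => (1:ℝ)) (ω i) :=
  (measurable_const.indicator hB).comp (measurable_pi_apply i)

lemma indInt (P : Measure (ℕ → S)) [IsProbabilityMeasure P] {B : Set S}
    (hB : MeasurableSet B) (i : ℕ) :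
    Integrable (fun ω : ℕ → S => B.indicator (fun _ => (1:ℝ)) (ω i)) P := by
  have h : (fun ω : ℕ → S => B.indicator (fun _ => (1:ℝ)) (ω i))
      = ((fun ω : ℕ → S => ω i) ⁻¹' B).indicator (fun _ => (1:ℝ)) := by
    ext ω; by_cases h : ω i ∈ B <;> simp [Set.indicator, h]
  rw [h]
  exact (integrable_const 1).indicator ((measurable_pi_apply i) hB)

lemma indSM {B : Set S} (hB : MeasurableSet B) {i n : ℕ} (hi : i < n) :
    StronglyMeasurable[cylG S n] (fun ω : ℕ → S => B.indicator (fun _ => (1:ℝ)) (ω i)) := by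
  have hg : Measurable[cylG S n] (fun ω : ℕ → S => fun j : Fin n => ω j) :=
    measurable_iff_comap_le.mpr le_rfl
  have h2 : Measurable (fun v : Fin n → S => B.indicator (fun _ => (1:ℝ)) (v ⟨i, hi⟩)) :=
    (measurable_const.indicator hB).comp (measurable_pi_apply _)
  have h : Measurable[cylG S n] (fun ω : ℕ → S => B.indicator (fun _ => (1:ℝ)) (ω i)) :=
    h2.comp hg
  exact h.stronglyMeasurable

lemma part1 (P : Measure (ℕ → S)) [IsProbabilityMeasure P] (hcid : CID P)
    {B : Set S} (hB : MeasurableSet B) (n k : ℕ) (hnk : n < k) :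
    (P[fun ω => empMeas k B ω | cylG S n]) =ᵐ[P]
      fun ω => (k : ℝ)⁻¹ *
        ((∑ i ∈ Finset.range (min n k), B.indicator (fun _ => (1 : ℝ)) (ω i))
          + max ((k : ℝ) - (n : ℝ)) 0 * predProb P n B ω) := by
  have hle : cylG S n ≤ (inferInstance : MeasurableSpace (ℕ → S)) := cylG_le n
  haveI : SigmaFinite (P.trim hle) := inferInstance
  have hemp : (fun ω => empMeas k B ω)
      = (k:ℝ)⁻¹ • ∑ i ∈ Finset.range k, (fun ω : ℕ → S => B.indicator (fun _ => (1:ℝ)) (ω i)) := by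
    ext ω; simp [empMeas, Finset.sum_apply]
  have h1 : (P[fun ω => empMeas k B ω | cylG S n]) =ᵐ[P]
      (k:ℝ)⁻¹ • P[∑ i ∈ Finset.range k, (fun ω : ℕ → S => B.indicator (fun _ => (1:ℝ)) (ω i)) | cylG S n] := by
    rw [hemp]; exact condExp_smul _ _ _
  have h2 : (P[∑ i ∈ Finset.range k, (fun ω : ℕ → S => B.indicator (fun _ => (1:ℝ)) (ω i)) | cylG S n]) =ᵐ[P]
      ∑ i ∈ Finset.range k, P[fun ω : ℕ → S => B.indicator (fun _ => (1:ℝ)) (ω i) | cylG S n] :=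
    condExp_finsetSum (fun i _ => indInt P hB i) _
  have h3 : (∑ i ∈ Finset.range k, P[fun ω : ℕ → S => B.indicator (fun _ => (1:ℝ)) (ω i) | cylG S n]) =ᵐ[P]
      (∑ i ∈ Finset.range n, (fun ω : ℕ → S => B.indicator (fun _ => (1:ℝ)) (ω i)))
        + ((k - n : ℕ) : ℝ) • predProb P n B := by
    rw [← Finset.sum_range_add_sum_Ico _ hnk.le]
    refine EventuallyEq.add (eventuallyEq_sum fun i hi => ?_) ?_
    · rw [condExp_of_stronglyMeasurable hle (indSM hB (Finset.mem_range.mp hi))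
        (indInt P hB i)]
    · have hc : ∀ i ∈ Finset.Ico n k,
          (P[fun ω : ℕ → S => B.indicator (fun _ => (1:ℝ)) (ω i) | cylG S n]) =ᵐ[P]
            predProb P n B := by
        intro i hi
        rcases eq_or_lt_of_le (Finset.mem_Ico.mp hi).1 with h | h
        · rw [← h]; rfl
        · exact hcid B hB n i h
      refine (eventuallyEq_sum hc).trans ?_
      rw [Finset.sum_const, Nat.card_Ico]
      refine Eventually.of_forall fun ω => ?_
      simp [Pi.smul_apply]
  have hmin : min n k = n := min_eq_left hnk.le
  have hmax : max ((k : ℝ) - (n : ℝ)) 0 = ((k - n : ℕ) : ℝ) := by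
    rw [Nat.cast_sub hnk.le, max_eq_left]
    have : (n:ℝ) ≤ (k:ℝ) := Nat.cast_le.mpr hnk.le
    linarith
  filter_upwards [h1, h2, h3] with ω hω1 hω2 hω3
  rw [hω1]
  simp only [Pi.smul_apply, smul_eq_mul]
  rw [hω2, hω3]
  simp [hmin, hmax, Finset.sum_apply, Pi.add_apply, Pi.smul_apply, smul_eq_mul]

omit [MeasurableSpace S] in
lemma abs_empMeas_le_one {B : Set S} (m : ℕ) (ω : ℕ → S) : |empMeas m B ω| ≤ 1 := by
  have h0 : ∀ i, 0 ≤ B.indicator (fun _ => (1:ℝ)) (ω i) :=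
    fun i => Set.indicator_nonneg (fun _ _ => zero_le_one) _
  have h1 : ∀ i, B.indicator (fun _ => (1:ℝ)) (ω i) ≤ 1 := by
    intro i; by_cases h : ω i ∈ B <;> simp [Set.indicator, h]
  have hs0 : 0 ≤ ∑ i ∈ Finset.range m, B.indicator (fun _ => (1:ℝ)) (ω i) :=
    Finset.sum_nonneg fun i _ => h0 i
  have hs1 : ∑ i ∈ Finset.range m, B.indicator (fun _ => (1:ℝ)) (ω i) ≤ (m:ℝ) := by
    calc ∑ i ∈ Finset.range m, B.indicator (fun _ => (1:ℝ)) (ω i)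
        ≤ ∑ _i ∈ Finset.range m, (1:ℝ) := Finset.sum_le_sum fun i _ => h1 i
      _ = (m:ℝ) := by simp
  rcases Nat.eq_zero_or_pos m with hm | hm
  · simp [empMeas, hm]
  · have hmpos : (0:ℝ) < m := Nat.cast_pos.mpr hm
    rw [empMeas, abs_of_nonneg (mul_nonneg (inv_nonneg.mpr hmpos.le) hs0)]
    calc (m:ℝ)⁻¹ * ∑ i ∈ Finset.range m, B.indicator (fun _ => (1:ℝ)) (ω i)
        ≤ (m:ℝ)⁻¹ * (m:ℝ) := mul_le_mul_of_nonneg_left hs1 (inv_nonneg.mpr hmpos.le)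
      _ = 1 := inv_mul_cancel₀ hmpos.ne'

lemma part2 (P : Measure (ℕ → S)) [IsProbabilityMeasure P] (hcid : CID P)
    {B : Set S} (hB : MeasurableSet B) (μB : (ℕ → S) → ℝ) (hμm : Measurable μB)
    (hbd : ∃ C : ℝ, ∀ ω, |μB ω| ≤ C)
    (hconv : ∀ᵐ ω ∂P, Tendsto (fun m => empMeas m B ω) atTop (nhds (μB ω)))
    (n : ℕ) : (P[μB | cylG S n]) =ᵐ[P] predProb P n B := by
  have hle : cylG S n ≤ (inferInstance : MeasurableSpace (ℕ → S)) := cylG_le n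
  haveI : SigmaFinite (P.trim hle) := inferInstance
  set a : (ℕ → S) → ℝ := predProb P n B with ha
  set c : ℕ → ℝ := fun k => ((n + 1 + k : ℕ) : ℝ) with hc
  have hc_pos : ∀ k, (0:ℝ) < c k := fun k => by
    simp only [hc]; exact_mod_cast Nat.succ_le_iff.mp (by omega)
  have hc_ge : ∀ k, (n:ℝ) ≤ c k := fun k => by
    simp only [hc]; exact_mod_cast (by omega : n ≤ n + 1 + k)
  have hc_ge1 : ∀ k, (1:ℝ) ≤ c k := fun k => by
    simp only [hc]; exact_mod_cast (by omega : 1 ≤ n + 1 + k)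
  set fs : ℕ → (ℕ → S) → ℝ := fun k ω => empMeas (n + 1 + k) B ω with hfs_def
  set gs : ℕ → (ℕ → S) → ℝ := fun k ω =>
    (c k)⁻¹ * (∑ i ∈ Finset.range n, B.indicator (fun _ => (1:ℝ)) (ω i))
      + (1 - (n:ℝ) * (c k)⁻¹) * a ω with hgs_def
  -- part 1 conclusion rewritten
  have h_eq : ∀ k, (P[fs k | cylG S n]) =ᵐ[P] gs k := by
    intro k
    have h := part1 P hcid hB n (n + 1 + k) (by omega)
    refine h.trans (Eventually.of_forall fun ω => ?_)
    have hmin : min n (n + 1 + k) = n := min_eq_left (by omega)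
    have hmax : max (((n + 1 + k : ℕ) : ℝ) - (n:ℝ)) 0 = c k - n :=
      max_eq_left (by have := hc_ge k; simp only [hc] at this ⊢; linarith)
    simp only [hgs_def, hmin, hmax]
    have hne : c k ≠ 0 := (hc_pos k).ne'
    rw [show ((n + 1 + k : ℕ) : ℝ) = c k from rfl]
    linear_combination (predProb P n B ω) * (inv_mul_cancel₀ hne)
  -- gs is G_n-measurable and integrable
  have hsum_sm : StronglyMeasurable[cylG S n]
      (fun ω : ℕ → S => ∑ i ∈ Finset.range n, B.indicator (fun _ => (1:ℝ)) (ω i)) :=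
    Finset.stronglyMeasurable_fun_sum _ fun i hi => indSM hB (Finset.mem_range.mp hi)
  have hsm_a : StronglyMeasurable[cylG S n] a := stronglyMeasurable_condExp
  have hsm_gs : ∀ k, StronglyMeasurable[cylG S n] (gs k) := fun k =>
    (hsum_sm.const_mul _).add (hsm_a.const_mul _)
  have hint_sum : Integrable
      (fun ω : ℕ → S => ∑ i ∈ Finset.range n, B.indicator (fun _ => (1:ℝ)) (ω i)) P :=
    integrable_finset_sum _ fun i _ => indInt P hB i
  have hint_a : Integrable a P := integrable_condExp
  have hint_gs : ∀ k, Integrable (gs k) P := fun k =>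
    (hint_sum.const_mul _).add (hint_a.const_mul _)
  have hint_fs : ∀ k, Integrable (fs k) P := by
    intro k
    have : Integrable (fun ω : ℕ → S =>
        ((n+1+k : ℕ):ℝ)⁻¹ * ∑ i ∈ Finset.range (n+1+k), B.indicator (fun _ => (1:ℝ)) (ω i)) P :=
      (integrable_finset_sum _ fun i _ => indInt P hB i).const_mul _
    exact this
  have hgs_ce : ∀ k, P[gs k | cylG S n] = gs k := fun k =>
    condExp_of_stronglyMeasurable hle (hsm_gs k) (hint_gs k)
  have hfg : ∀ k, (P[fs k | cylG S n]) =ᵐ[P] P[gs k | cylG S n] := fun k => by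
    rw [hgs_ce k]; exact h_eq k
  -- convergence
  have hι : Tendsto (fun k : ℕ => n + 1 + k) atTop atTop :=
    tendsto_atTop_mono (fun k => Nat.le_add_left k (n + 1)) tendsto_id
  have hcinv : Tendsto (fun k => (c k)⁻¹) atTop (nhds 0) :=
    tendsto_inv_atTop_zero.comp (tendsto_natCast_atTop_atTop.comp hι)
  have hgs_tendsto : ∀ ω, Tendsto (fun k => gs k ω) atTop (nhds (a ω)) := by
    intro ω
    have h1 : Tendsto (fun k => (c k)⁻¹ *
        (∑ i ∈ Finset.range n, B.indicator (fun _ => (1:ℝ)) (ω i))) atTop (nhds 0) := by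
      simpa using hcinv.mul_const _
    have h2 : Tendsto (fun k => (1 - (n:ℝ) * (c k)⁻¹) * a ω) atTop (nhds (a ω)) := by
      have := (tendsto_const_nhds (x := (1:ℝ)) (f := atTop (α := ℕ))).sub
        (hcinv.const_mul (n:ℝ))
      simpa using this.mul_const (a ω)
    simpa using h1.add h2
  have hfs_tendsto : ∀ᵐ ω ∂P, Tendsto (fun k => fs k ω) atTop (nhds (μB ω)) := by
    filter_upwards [hconv] with ω hω
    exact hω.comp hι
  -- bounds
  have hfs_bound : ∀ k, ∀ᵐ ω ∂P, ‖fs k ω‖ ≤ (1:ℝ) := fun k =>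
    Eventually.of_forall fun ω => by
      simpa [Real.norm_eq_abs] using abs_empMeas_le_one (B := B) (n+1+k) ω
  have hgs_bound : ∀ k, ∀ᵐ ω ∂P, ‖gs k ω‖ ≤ (n:ℝ) + |a ω| := by
    intro k
    refine Eventually.of_forall fun ω => ?_
    have h0 : ∀ i, 0 ≤ B.indicator (fun _ => (1:ℝ)) (ω i) :=
      fun i => Set.indicator_nonneg (fun _ _ => zero_le_one) _
    have hC0 : 0 ≤ ∑ i ∈ Finset.range n, B.indicator (fun _ => (1:ℝ)) (ω i) :=
      Finset.sum_nonneg fun i _ => h0 i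
    have hC1 : ∑ i ∈ Finset.range n, B.indicator (fun _ => (1:ℝ)) (ω i) ≤ (n:ℝ) := by
      calc ∑ i ∈ Finset.range n, B.indicator (fun _ => (1:ℝ)) (ω i)
          ≤ ∑ _i ∈ Finset.range n, (1:ℝ) :=
            Finset.sum_le_sum fun i _ => by by_cases h : ω i ∈ B <;> simp [Set.indicator, h]
        _ = (n:ℝ) := by simp
    have hcp := hc_pos k
    have hinv0 : (0:ℝ) ≤ (c k)⁻¹ := (inv_nonneg.mpr hcp.le)
    have hinv1 : (c k)⁻¹ ≤ 1 := by
      rw [inv_le_one_iff₀]; right; exact hc_ge1 k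
    have hmul1 : (n:ℝ) * (c k)⁻¹ ≤ 1 := by
      have := mul_le_mul_of_nonneg_right (hc_ge k) hinv0
      rwa [mul_inv_cancel₀ hcp.ne'] at this
    have habs : |1 - (n:ℝ) * (c k)⁻¹| ≤ 1 := by
      rw [abs_le]
      constructor
      · nlinarith [mul_nonneg (Nat.cast_nonneg n : (0:ℝ) ≤ n) hinv0]
      · nlinarith [mul_nonneg (Nat.cast_nonneg n : (0:ℝ) ≤ n) hinv0]
    rw [Real.norm_eq_abs]
    calc |gs k ω| ≤ |(c k)⁻¹ * (∑ i ∈ Finset.range n, B.indicator (fun _ => (1:ℝ)) (ω i))|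
          + |(1 - (n:ℝ) * (c k)⁻¹) * a ω| := abs_add_le _ _
      _ = (c k)⁻¹ * (∑ i ∈ Finset.range n, B.indicator (fun _ => (1:ℝ)) (ω i))
          + |1 - (n:ℝ) * (c k)⁻¹| * |a ω| := by
            rw [abs_mul, abs_mul, abs_of_nonneg hinv0, abs_of_nonneg hC0]
      _ ≤ (n:ℝ) + |a ω| := by
            refine add_le_add ?_ ?_
            · nlinarith
            · nlinarith [abs_nonneg (a ω)]
  have hbound_int : Integrable (fun ω => (n:ℝ) + |a ω|) P :=
    (integrable_const _).add hint_a.abs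
  obtain ⟨C, hCbd⟩ := hbd
  have hμint : Integrable μB P :=
    ⟨hμm.aestronglyMeasurable, HasFiniteIntegral.of_bounded
      (Eventually.of_forall fun ω => by simpa [Real.norm_eq_abs] using hCbd ω)⟩
  have hmain : (P[μB | cylG S n]) =ᵐ[P] P[a | cylG S n] :=
    tendsto_condExp_unique fs gs μB a hint_fs hint_gs hfs_tendsto
      (Eventually.of_forall hgs_tendsto) (fun _ => (1:ℝ)) (integrable_const _)
      (fun ω => (n:ℝ) + |a ω|) hbound_int hfs_bound hgs_bound hfg
  refine hmain.trans ?_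
  have : (P[a | cylG S n]) =ᵐ[P]
      P[fun ω => B.indicator (fun _ => (1:ℝ)) (ω n) | cylG S n] :=
    condExp_condExp_of_le le_rfl hle
  exact this

end Aux

theorem stmt0 {S : Type*} [MeasurableSpace S] (P : Measure (ℕ → S))
    [IsProbabilityMeasure P] (hcid : CID P) (B : Set S) (hB : MeasurableSet B) :
    (∀ n k : ℕ, n < k →
      (P[fun ω => empMeas k B ω | cylG S n]) =ᵐ[P]
        fun ω => (k : ℝ)⁻¹ *
          ((∑ i ∈ Finset.range (min n k), B.indicator (fun _ => (1 : ℝ)) (ω i))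
            + max ((k : ℝ) - (n : ℝ)) 0 * predProb P n B ω)) ∧
    (∀ μB : (ℕ → S) → ℝ, Measurable μB → (∃ C : ℝ, ∀ ω, |μB ω| ≤ C) →
      (∀ᵐ ω ∂P, Tendsto (fun n => empMeas n B ω) atTop (nhds (μB ω))) →
      ∀ n : ℕ, (P[μB | cylG S n]) =ᵐ[P] predProb P n B) := by
  exact ⟨fun n k hnk => part1 P hcid hB n k hnk,
    fun μB hμm hbd hconv n => part2 P hcid hB μB hμm hbd hconv n⟩
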